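/- arXiv:1711.01206 — 5 statements merged into one kernel-verified Lean document; each statement's English description precedes it below -/
import Mathlib

section
/- Let u ~ N(0, 1) and ε ~ N(0, σ²) be independent real Gaussian random variables with σ ≥ 0. Then E[u · sign(u + ε)] = √(2/(π(σ² + 1))). -/
open MeasureTheory ProbabilityTheory Matrix Real

noncomputable section

/-- `sgn z = 1` if `z ≥ 0`, `-1` otherwise. -/
def sgn (z : ℝ) : ℝ := if 0 ≤ z then 1 else -1

/-- Euclidean (ℓ²) norm of a finite vector. -/
def l2norm {k : ℕ} (v : Fin k → ℝ) : ℝ := Real.sqrt (∑ i, v i ^ 2)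

/-- ℓ¹ norm of a finite vector. -/
def l1norm {k : ℕ} (v : Fin k → ℝ) : ℝ := ∑ i, |v i|

/-- ℓ^∞ norm (maximum absolute entry) of a finite vector. -/
def linfNorm {k : ℕ} (v : Fin k → ℝ) : ℝ := ⨆ i, |v i|

/-- number of nonzero entries of a finite vector. -/
def l0norm {k : ℕ} (v : Fin k → ℝ) : ℕ := (Finset.univ.filter (fun i => v i ≠ 0)).card

/-- largest eigenvalue of a symmetric matrix, as the sup of the Rayleigh quotient
over the Euclidean unit sphere. -/
def gammaMax {ι : Type*} [Fintype ι] (M : Matrix ι ι ℝ) : ℝ :=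
  ⨆ x : {x : ι → ℝ // ∑ i, x i ^ 2 = 1}, (x : ι → ℝ) ⬝ᵥ M.mulVec (x : ι → ℝ)

/-- smallest eigenvalue of a symmetric matrix, as the inf of the Rayleigh quotient
over the Euclidean unit sphere. -/
def gammaMin {ι : Type*} [Fintype ι] (M : Matrix ι ι ℝ) : ℝ :=
  ⨅ x : {x : ι → ℝ // ∑ i, x i ^ 2 = 1}, (x : ι → ℝ) ⬝ᵥ M.mulVec (x : ι → ℝ)

/-- condition number `γ_max / γ_min`. -/
def kappa {ι : Type*} [Fintype ι] (M : Matrix ι ι ℝ) : ℝ := gammaMax M / gammaMin M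

/-- operator norm of a matrix, induced by the Euclidean norms. -/
def opNorm {ι κ : Type*} [Fintype ι] [Fintype κ] (M : Matrix ι κ ℝ) : ℝ :=
  ⨆ x : {x : κ → ℝ // ∑ j, x j ^ 2 = 1}, Real.sqrt (∑ i, (M.mulVec (x : κ → ℝ)) i ^ 2)

/-- maximum absolute entry of a matrix. -/
def matInfNorm {ι κ : Type*} [Fintype ι] [Fintype κ] (M : Matrix ι κ ℝ) : ℝ :=
  ⨆ p : ι × κ, |M p.1 p.2|

/-- A random vector `ψ` is centered Gaussian with covariance matrix `S` iff every linear
functional of it is a centered real Gaussian with the corresponding variance. -/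
def IsGaussianVector {Ω : Type*} [MeasurableSpace Ω] (μ : Measure Ω) {n : ℕ}
    (ψ : Ω → Fin n → ℝ) (S : Matrix (Fin n) (Fin n) ℝ) : Prop :=
  ∀ a : Fin n → ℝ,
    Measure.map (fun ω => ∑ i, a i * ψ ω i) μ =
      gaussianReal 0 (Real.toNNReal (a ⬝ᵥ S.mulVec a))

open scoped NNReal ENNReal

lemma measurable_sgn : Measurable sgn := by
  unfold sgn
  exact Measurable.ite (measurableSet_le measurable_const measurable_id) measurable_const
    measurable_const

lemma abs_sgn (z : ℝ) : |sgn z| = 1 := by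
  unfold sgn; split <;> simp

lemma integral_gaussianReal' {v : ℝ≥0} (hv : v ≠ 0) (g : ℝ → ℝ) :
    ∫ x, g x ∂(gaussianReal 0 v) = ∫ x, gaussianPDFReal 0 v x * g x := by
  rw [gaussianReal_of_var_ne_zero _ hv]
  have : gaussianPDF 0 v = fun x => ((gaussianPDFReal 0 v x).toNNReal : ℝ≥0∞) := by
    ext x; rfl
  rw [this, integral_withDensity_eq_integral_smul
    (by exact (measurable_gaussianPDFReal 0 v).real_toNNReal)]
  congr 1
  ext x
  rw [NNReal.smul_def, Real.coe_toNNReal _ (gaussianPDFReal_nonneg 0 v x), smul_eq_mul]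

lemma gaussianPDFReal_eq (v : ℝ≥0) (x : ℝ) :
    gaussianPDFReal 0 v x = (√(2 * π * v))⁻¹ * rexp (-x ^ 2 / (2 * v)) := by
  simp [gaussianPDFReal]

lemma integrable_xexp : Integrable (fun x : ℝ => x * rexp (-x ^ 2 / 2)) volume := by
  have h := integrable_mul_exp_neg_mul_sq (b := (1:ℝ)/2) (by norm_num)
  apply h.congr
  filter_upwards with x
  congr 1
  ring_nf

lemma integrable_id_gaussianReal (v : ℝ≥0) :
    Integrable id (gaussianReal 0 v) := by
  by_cases hv : v = 0
  · rw [hv, gaussianReal_zero_var]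
    exact ⟨measurable_id.aestronglyMeasurable, by simp [HasFiniteIntegral, lintegral_dirac]⟩
  rw [gaussianReal_of_var_ne_zero _ hv]
  have hv' : (0:ℝ) < v := lt_of_le_of_ne v.2 (by exact_mod_cast Ne.symm hv)
  have : gaussianPDF 0 v = fun x => ((gaussianPDFReal 0 v x).toNNReal : ℝ≥0∞) := by
    ext x; rfl
  rw [this, integrable_withDensity_iff
    (by exact (measurable_gaussianPDFReal 0 v).real_toNNReal.coe_nnreal_ennreal)
    (ae_of_all _ fun x => ENNReal.coe_lt_top)]
  have h : Integrable (fun x : ℝ => (√(2 * π * v))⁻¹ * (x * rexp (-(2*(v:ℝ))⁻¹ * x ^ 2))) volume :=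
    (integrable_mul_exp_neg_mul_sq (b := (2*(v:ℝ))⁻¹) (by positivity)).const_mul _
  apply h.congr
  filter_upwards with x
  simp only [id_eq, ENNReal.coe_toReal, Real.coe_toNNReal _ (gaussianPDFReal_nonneg 0 v x)]
  rw [gaussianPDFReal_eq]
  have : -x ^ 2 / (2 * (v:ℝ)) = -(2*(v:ℝ))⁻¹ * x ^ 2 := by ring
  rw [this]; ring

lemma integral_xexp_zero : ∫ x : ℝ, x * rexp (-x ^ 2 / 2) = 0 := by
  have h := integral_neg_eq_self (fun x : ℝ => x * rexp (-x ^ 2 / 2)) (volume : Measure ℝ)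
  simp only [neg_sq, neg_mul] at h
  rw [integral_neg] at h
  linarith

lemma int_Ioi_xexp (a : ℝ) : ∫ x in Set.Ioi a, x * rexp (-x ^ 2 / 2) = rexp (-a ^ 2 / 2) := by
  have hderiv : ∀ x ∈ Set.Ici a, HasDerivAt (fun x : ℝ => -rexp (-x ^ 2 / 2))
      (x * rexp (-x ^ 2 / 2)) x := by
    intro x _
    have h1 : HasDerivAt (fun x : ℝ => -x ^ 2 / 2) (-x) x := by
      have := ((hasDerivAt_pow 2 x).neg).div_const 2
      exact this.congr_deriv (by simp; ring)
    have h2 := (h1.exp).neg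
    exact h2.congr_deriv (by ring)
  have htend : Filter.Tendsto (fun x : ℝ => -rexp (-x ^ 2 / 2)) Filter.atTop (nhds 0) := by
    rw [← neg_zero]
    apply Filter.Tendsto.neg
    apply Real.tendsto_exp_atBot.comp
    have : Filter.Tendsto (fun x : ℝ => x ^ 2 / 2) Filter.atTop Filter.atTop :=
      (Filter.tendsto_pow_atTop two_ne_zero).atTop_div_const (by norm_num)
    have h2 := (Filter.tendsto_neg_atTop_atBot (G := ℝ)).comp this
    apply h2.congr
    intro x; simp [Function.comp, neg_div]
  have hint : IntegrableOn (fun x : ℝ => x * rexp (-x ^ 2 / 2)) (Set.Ioi a) :=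
    integrable_xexp.integrableOn
  have := integral_Ioi_of_hasDerivAt_of_tendsto' hderiv hint htend
  rw [this]; ring

lemma inner_integral (y : ℝ) :
    ∫ x, x * sgn (x + y) ∂(gaussianReal 0 1) = 2 * (√(2 * π))⁻¹ * rexp (-y ^ 2 / 2) := by
  rw [integral_gaussianReal' one_ne_zero]
  have key : ∀ x : ℝ, gaussianPDFReal 0 1 x * (x * sgn (x + y)) =
      Set.indicator (Set.Ici (-y)) (fun x => 2 * ((√(2 * π))⁻¹ * (x * rexp (-x ^ 2 / 2)))) x
        - (√(2 * π))⁻¹ * (x * rexp (-x ^ 2 / 2)) := by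
    intro x
    rw [gaussianPDFReal_eq]
    simp only [NNReal.coe_one, mul_one]
    by_cases h : x ∈ Set.Ici (-y)
    · rw [Set.indicator_of_mem h]
      have hs : sgn (x + y) = 1 := by
        unfold sgn; rw [if_pos (by simp only [Set.mem_Ici] at h; linarith)]
      rw [hs]; ring
    · rw [Set.indicator_of_notMem h]
      have hs : sgn (x + y) = -1 := by
        unfold sgn
        rw [if_neg (by simp only [Set.mem_Ici, not_le] at h; intro hc; linarith)]
      rw [hs]; ring
  simp only [key]
  have h1 : Integrable (fun x : ℝ => (√(2 * π))⁻¹ * (x * rexp (-x ^ 2 / 2))) volume :=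
    integrable_xexp.const_mul _
  have h2 : Integrable (Set.indicator (Set.Ici (-y))
      (fun x : ℝ => 2 * ((√(2 * π))⁻¹ * (x * rexp (-x ^ 2 / 2))))) volume :=
    (h1.const_mul 2).indicator measurableSet_Ici
  rw [integral_sub h2 h1, integral_indicator measurableSet_Ici, integral_Ici_eq_integral_Ioi,
    integral_const_mul, integral_const_mul, integral_const_mul, integral_xexp_zero,
    int_Ioi_xexp, neg_sq]
  ring

lemma outer_integral (v : ℝ≥0) :
    ∫ y, rexp (-y ^ 2 / 2) ∂(gaussianReal 0 v) = (√((v : ℝ) + 1))⁻¹ := by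
  by_cases hv : v = 0
  · subst hv
    rw [gaussianReal_zero_var, integral_dirac]
    norm_num
  rw [integral_gaussianReal' hv]
  have hv' : (0 : ℝ) < v := lt_of_le_of_ne v.2 (by exact_mod_cast Ne.symm hv)
  have key : ∀ y : ℝ, gaussianPDFReal 0 v y * rexp (-y ^ 2 / 2) =
      (√(2 * π * v))⁻¹ * rexp (-(((v : ℝ) + 1) / (2 * v)) * y ^ 2) := by
    intro y
    rw [gaussianPDFReal_eq, mul_assoc, ← Real.exp_add]
    congr 2
    field_simp
    ring
  simp only [key]
  rw [integral_const_mul, integral_gaussian]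
  have hπ := Real.pi_pos
  rw [← Real.sqrt_inv, ← Real.sqrt_mul (by positivity)]
  rw [show (2 * π * (v:ℝ))⁻¹ * (π / (((v:ℝ) + 1) / (2 * (v:ℝ)))) = ((v:ℝ) + 1)⁻¹ by
    have h1 : (v:ℝ) + 1 ≠ 0 := by positivity
    field_simp]
  rw [Real.sqrt_inv]

/-- If `u ~ N(0,1)` and `ε ~ N(0, σ²)` are independent, then
`E[u · sign(u + ε)] = √(2/(π(σ² + 1)))`. -/
theorem expectation_mul_sign_gaussian
    {Ω : Type} [MeasurableSpace Ω] (μ : Measure Ω) [IsProbabilityMeasure μ]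
    (σ : ℝ) (hσ : 0 ≤ σ) (u ε : Ω → ℝ)
    (hu : Measure.map u μ = gaussianReal 0 1)
    (hε : Measure.map ε μ = gaussianReal 0 (Real.toNNReal (σ ^ 2)))
    (hindep : IndepFun u ε μ) :
    ∫ ω, u ω * sgn (u ω + ε ω) ∂μ = Real.sqrt (2 / (Real.pi * (σ ^ 2 + 1))) := by
  set v : ℝ≥0 := Real.toNNReal (σ ^ 2) with hvdef
  have hvcoe : (v : ℝ) = σ ^ 2 := Real.coe_toNNReal _ (sq_nonneg σ)
  have hu' : AEMeasurable u μ := by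
    by_contra h
    rw [Measure.map_of_not_aemeasurable h] at hu
    exact (IsProbabilityMeasure.ne_zero (gaussianReal 0 1)) hu.symm
  have hε' : AEMeasurable ε μ := by
    by_contra h
    rw [Measure.map_of_not_aemeasurable h] at hε
    exact (IsProbabilityMeasure.ne_zero (gaussianReal 0 v)) hε.symm
  have hmap : μ.map (fun ω => (u ω, ε ω)) = (gaussianReal 0 1).prod (gaussianReal 0 v) := by
    rw [(indepFun_iff_map_prod_eq_prod_map_map hu' hε').mp hindep, hu, hε]
  have hfmeas : Measurable (fun p : ℝ × ℝ => p.1 * sgn (p.1 + p.2)) :=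
    measurable_fst.mul (measurable_sgn.comp (measurable_fst.add measurable_snd))
  have h1 : ∫ ω, u ω * sgn (u ω + ε ω) ∂μ
      = ∫ p : ℝ × ℝ, p.1 * sgn (p.1 + p.2) ∂((gaussianReal 0 1).prod (gaussianReal 0 v)) := by
    rw [← hmap, integral_map (hu'.prodMk hε') hfmeas.aestronglyMeasurable]
  have habs : Integrable (fun x : ℝ => |x|) (gaussianReal 0 1) :=
    (integrable_id_gaussianReal 1).abs
  have hint : Integrable (fun p : ℝ × ℝ => p.1 * sgn (p.1 + p.2))
      ((gaussianReal 0 1).prod (gaussianReal 0 v)) := by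
    rw [integrable_prod_iff hfmeas.aestronglyMeasurable]
    constructor
    · filter_upwards with x
      apply (integrable_const |x|).mono'
        ((measurable_sgn.comp (measurable_const.add measurable_id)).const_mul x).aestronglyMeasurable
      filter_upwards with y
      rw [Real.norm_eq_abs, abs_mul]
      simp only [Function.comp, id_eq, abs_sgn, mul_one, le_refl]
    · apply habs.congr
      filter_upwards with x
      have hn : ∀ y : ℝ, ‖x * sgn (x + y)‖ = |x| := fun y => by
        rw [Real.norm_eq_abs, abs_mul, abs_sgn, mul_one]
      simp only [hn]
      rw [integral_const]
      simp
  rw [h1, integral_prod_symm _ hint]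
  simp only [inner_integral]
  rw [integral_const_mul, outer_integral, hvcoe]
  have hπ := Real.pi_pos
  have hs1 : (0:ℝ) < σ ^ 2 + 1 := by positivity
  have hA : 0 < √(2 * π) := Real.sqrt_pos.mpr (by positivity)
  have hB : 0 < √(σ ^ 2 + 1) := Real.sqrt_pos.mpr hs1
  have hrhs : √(2 / (π * (σ ^ 2 + 1))) = 2 * (√(2 * π))⁻¹ * (√(σ ^ 2 + 1))⁻¹ := by
    rw [show (2:ℝ) / (π * (σ ^ 2 + 1)) = 2 ^ 2 / (2 * π * (σ ^ 2 + 1)) by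
        field_simp,
      Real.sqrt_div (by positivity), Real.sqrt_sq (by norm_num),
      Real.sqrt_mul (by positivity : (0:ℝ) ≤ 2 * π)]
    field_simp
  rw [hrhs]
end
end

section
/- Let Ψ ∈ ℝ^{m×n}, y ∈ ℝᵐ, λ > 0. A vector x ∈ ℝⁿ is a global minimizer of the function x ↦ (1/(2m))‖y − Ψx‖₂² + λ‖x‖₁ if and only if, with d = Ψᵗ(y − Ψx)/m, one has x = S_λ(x + d). -/
open MeasureTheory ProbabilityTheory Matrix Real

noncomputable section

/-- componentwise soft-thresholding operator `S_λ(z) = sign(z)·max{|z| − λ, 0}`. -/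
def softThresh (lam z : ℝ) : ℝ := sgn z * max (|z| - lam) 0

lemma soft_iff (lam x d : ℝ) (hlam : 0 < lam) :
    x = softThresh lam (x + d) ↔ (|d| ≤ lam ∧ d * x = lam * |x|) := by
  unfold softThresh sgn
  constructor
  · intro h
    split_ifs at h with hs
    · rcases le_or_gt (|x + d|) lam with h1 | h1
      · have hx0 : x = 0 := by rw [h]; simp [max_eq_right, sub_nonpos.mpr h1]
        rw [hx0, zero_add] at h1
        rw [hx0]
        exact ⟨h1, by simp⟩
      · rw [abs_of_nonneg hs] at h h1
        have hd : d = lam := by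
          rw [max_eq_left (by linarith)] at h; linarith
        have hx : 0 < x := by linarith
        rw [abs_of_pos hx, hd, abs_of_pos hlam]
        exact ⟨le_refl _, by ring⟩
    · push_neg at hs
      rw [abs_of_neg hs] at h
      rcases le_or_gt (-(x + d)) lam with h1 | h1
      · have hx0 : x = 0 := by
          rw [h, max_eq_right (by linarith : -(x+d) - lam ≤ 0)]; ring
        rw [hx0, zero_add] at hs h1
        rw [hx0]
        exact ⟨abs_le.mpr ⟨by linarith, by linarith⟩, by simp⟩
      · have hd : d = -lam := by
          rw [max_eq_left (by linarith)] at h; linarith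
        have hx : x < 0 := by linarith
        rw [abs_of_neg hx, hd, abs_neg, abs_of_pos hlam]
        exact ⟨le_refl _, by ring⟩
  · rintro ⟨h1, h2⟩
    rcases lt_trichotomy x 0 with hx | hx | hx
    · rw [abs_of_neg hx] at h2
      have hd : d = -lam := by
        have : d * x = (-lam) * x := by linarith
        exact mul_right_cancel₀ (ne_of_lt hx) this
      have hxd : x + d < 0 := by rw [hd]; linarith
      rw [if_neg (not_le.mpr hxd), abs_of_neg hxd, max_eq_left (by rw [hd]; linarith)]
      rw [hd]; ring
    · rw [hx, zero_add]
      have : max (|d| - lam) 0 = 0 := max_eq_right (by linarith)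
      rw [this, mul_zero]
    · rw [abs_of_pos hx] at h2
      have hd : d = lam := by
        exact mul_right_cancel₀ (ne_of_gt hx) h2
      have hxd : 0 < x + d := by rw [hd]; linarith
      rw [if_pos hxd.le, abs_of_pos hxd, max_eq_left (by rw [hd]; linarith), one_mul]
      rw [hd]; ring

lemma eq_zero_of_abs_le_mul (e c δ : ℝ) (hc : 0 ≤ c) (hδ : 0 < δ)
    (h : ∀ s : ℝ, 0 < s → s < δ → |e| ≤ c * s) : e = 0 := by
  by_contra he
  have he' : 0 < |e| := abs_pos.mpr he
  set s := min (δ/2) (|e|/(2*c+2)) with hs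
  have hs1 : 0 < s := lt_min (by linarith) (by positivity)
  have hs2 : s < δ := lt_of_le_of_lt (min_le_left _ _) (by linarith)
  have h3 := h s hs1 hs2
  have h4 : s ≤ |e|/(2*c+2) := min_le_right _ _
  have h5 : c * s ≤ c * (|e|/(2*c+2)) := by nlinarith
  have h6 : c * (|e|/(2*c+2)) < |e| := by
    rw [mul_div_assoc']
    rw [div_lt_iff₀ (by linarith)]
    nlinarith
  linarith

lemma kkt_of_min (lam c x d : ℝ) (hlam : 0 < lam) (hc : 0 ≤ c)
    (h : ∀ t : ℝ, 0 ≤ c * t^2 + lam * |x + t| - lam * |x| - t * d) :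
    |d| ≤ lam ∧ d * x = lam * |x| := by
  have hdle : d ≤ lam := by
    by_contra hd
    push_neg at hd
    set t := (d - lam)/(c+1) with ht
    have ht0 : 0 < t := div_pos (by linarith) (by linarith)
    have h1 := h t
    have h2 : |x + t| ≤ |x| + t := by
      calc |x + t| ≤ |x| + |t| := abs_add_le _ _
      _ = |x| + t := by rw [abs_of_pos ht0]
    have h3 : 0 ≤ c * t^2 + lam * t - t * d := by nlinarith
    have h4 : c * t < d - lam := by
      rw [ht, mul_div_assoc']
      rw [div_lt_iff₀ (by linarith)]
      nlinarith
    nlinarith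
  have hdge : -lam ≤ d := by
    by_contra hd
    push_neg at hd
    set t := (d + lam)/(c+1) with ht
    have ht0 : t < 0 := by
      apply div_neg_of_neg_of_pos (by linarith) (by linarith)
    have h1 := h t
    have h2 : |x + t| ≤ |x| - t := by
      calc |x + t| ≤ |x| + |t| := abs_add_le _ _
      _ = |x| - t := by rw [abs_of_neg ht0]; ring
    have h3 : 0 ≤ c * t^2 - lam * t - t * d := by nlinarith
    have h4 : d + lam < c * t := by
      rw [ht, mul_div_assoc']
      rw [lt_div_iff₀ (by linarith)]
      nlinarith
    nlinarith
  refine ⟨abs_le.mpr ⟨hdge, hdle⟩, ?_⟩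
  rcases lt_trichotomy x 0 with hx | hx | hx
  · rw [abs_of_neg hx]
    have key : d + lam = 0 := by
      apply eq_zero_of_abs_le_mul _ c (-x) hc (by linarith)
      intro s hs1 hs2
      have e1 := h s
      have e2 := h (-s)
      have a1 : |x + s| = -x - s := by
        rw [abs_of_neg (by linarith)]; ring
      have a2 : |x + -s| = -x + s := by
        rw [abs_of_neg (by linarith)]; ring
      rw [a1, abs_of_neg hx] at e1
      rw [a2, abs_of_neg hx] at e2
      -- e1 : 0 ≤ c s² - lam s - s d  ⇒ d + lam ≤ c s
      -- e2 : 0 ≤ c s² + lam s + s d  ⇒ -(d+lam) ≤ c s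
      rw [abs_le]
      constructor <;> nlinarith
    nlinarith
  · rw [hx, abs_zero]; ring
  · rw [abs_of_pos hx]
    have key : d - lam = 0 := by
      apply eq_zero_of_abs_le_mul _ c x hc hx
      intro s hs1 hs2
      have e1 := h s
      have e2 := h (-s)
      have a1 : |x + s| = x + s := by rw [abs_of_pos (by linarith)]
      have a2 : |x + -s| = x - s := by
        rw [abs_of_pos (by linarith)]; ring
      rw [a1, abs_of_pos hx] at e1
      rw [a2, abs_of_pos hx] at e2
      rw [abs_le]
      constructor <;> nlinarith
    nlinarith

lemma l1norm_add_single {n : ℕ} (x : Fin n → ℝ) (j : Fin n) (t : ℝ) :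
    l1norm (x + Pi.single j t) = l1norm x - |x j| + |x j + t| := by
  unfold l1norm
  have key : ∀ k : Fin n, |(x + Pi.single j t : Fin n → ℝ) k|
      = |x k| + (if k = j then |x j + t| - |x j| else 0) := by
    intro k
    by_cases hk : k = j
    · subst hk
      rw [Pi.add_apply, Pi.single_eq_same, if_pos rfl]
      ring
    · rw [Pi.add_apply, Pi.single_eq_of_ne hk, if_neg hk, add_zero, add_zero]
  simp only [key, Finset.sum_add_distrib, Finset.sum_ite_eq', Finset.mem_univ, if_true]
  ring


/-- `x` is a global minimizer of `(1/2m)‖y − Ψx‖₂² + λ‖x‖₁` if and only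
if `x = S_λ(x + d)` where `d = Ψᵗ(y − Ψx)/m`. -/
theorem l1_least_squares_kkt_iff
    (m n : ℕ) (Ψ : Matrix (Fin m) (Fin n) ℝ) (y : Fin m → ℝ) (lam : ℝ) (hlam : 0 < lam)
    (x : Fin n → ℝ) :
    (∀ z : Fin n → ℝ,
        1 / (2 * (m : ℝ)) * ∑ i, (y i - Ψ.mulVec x i) ^ 2 + lam * l1norm x ≤
          1 / (2 * (m : ℝ)) * ∑ i, (y i - Ψ.mulVec z i) ^ 2 + lam * l1norm z) ↔
      (∀ j, x j =
        softThresh lam (x j + (Ψᵀ.mulVec (fun i => y i - Ψ.mulVec x i)) j / (m : ℝ))) := by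
  have hBj : ∀ (r : Fin m → ℝ) (j : Fin n), Ψᵀ.mulVec r j = ∑ i, Ψ i j * r i := by
    intro r j; simp [Matrix.mulVec, dotProduct]
  rcases Nat.eq_zero_or_pos m with hm | hm
  · subst hm
    have hB0 : ∀ j, (Ψᵀ.mulVec (fun i => y i - Ψ.mulVec x i)) j / ((0:ℕ) : ℝ) = 0 := by
      intro j; rw [hBj]; simp
    simp only [hB0, add_zero, Finset.univ_eq_empty, Finset.sum_empty, Nat.cast_zero,
      mul_zero, div_zero, zero_mul, zero_add]
    constructor
    · intro h j
      have h0 := h 0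
      have hl0 : l1norm (0 : Fin n → ℝ) = 0 := by simp [l1norm]
      rw [hl0, mul_zero] at h0
      have hxn : 0 ≤ l1norm x := Finset.sum_nonneg fun i _ => abs_nonneg _
      have hx0 : l1norm x = 0 := by nlinarith
      have hxj : x j = 0 := by
        have h1 : |x j| ≤ l1norm x :=
          Finset.single_le_sum (fun i _ => abs_nonneg (x i)) (Finset.mem_univ j)
        have : |x j| = 0 := le_antisymm (by linarith) (abs_nonneg _)
        exact abs_eq_zero.mp this
      rw [hxj]
      unfold softThresh sgn
      rw [abs_zero, if_pos le_rfl, max_eq_right (by linarith : (0:ℝ) - lam ≤ 0), mul_zero]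
    · intro h z
      have hx0 : ∀ j, x j = 0 := by
        intro j
        have := (soft_iff lam (x j) 0 hlam).mp (by rw [add_zero]; exact h j)
        have h2 := this.2
        rw [zero_mul] at h2
        have : |x j| = 0 := by nlinarith
        exact abs_eq_zero.mp this
      have : l1norm x = 0 := by simp [l1norm, hx0]
      have hzn : 0 ≤ l1norm z := Finset.sum_nonneg fun i _ => abs_nonneg _
      rw [this]
      nlinarith
  · have hm' : (0:ℝ) < m := by exact_mod_cast hm
    set r : Fin m → ℝ := fun i => y i - Ψ.mulVec x i with hr
    have hri : ∀ i, y i - Ψ.mulVec x i = r i := fun i => rfl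
    constructor
    · intro h j
      rw [soft_iff _ _ _ hlam]
      apply kkt_of_min lam ((∑ i, Ψ i j ^ 2) / (2*(m:ℝ))) (x j)
        (Ψᵀ.mulVec r j / (m:ℝ)) hlam (by positivity)
      intro t
      have hz := h (x + Pi.single j t)
      have hmv : ∀ i, y i - Ψ.mulVec (x + Pi.single j t) i = r i - t * Ψ i j := by
        intro i
        rw [Matrix.mulVec_add, Matrix.mulVec_single]
        simp [hr]; ring
      have expand : ∑ i, (y i - Ψ.mulVec (x + Pi.single j t) i) ^ 2 =
          (∑ i, r i ^ 2) - 2*t*(∑ i, Ψ i j * r i) + t^2*(∑ i, Ψ i j ^ 2) := by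
        simp only [hmv]
        rw [Finset.mul_sum, Finset.mul_sum, ← Finset.sum_sub_distrib,
          ← Finset.sum_add_distrib]
        apply Finset.sum_congr rfl
        intro i _; ring
      rw [expand, l1norm_add_single] at hz
      simp only [hri] at hz
      rw [hBj]
      have key : 1/(2*(m:ℝ)) * ((∑ i, r i ^ 2) - 2*t*(∑ i, Ψ i j * r i) + t^2*(∑ i, Ψ i j ^ 2))
          = 1/(2*(m:ℝ)) * (∑ i, r i ^ 2) - t * ((∑ i, Ψ i j * r i) / (m:ℝ))
            + (∑ i, Ψ i j ^ 2) / (2*(m:ℝ)) * t^2 := by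
        field_simp
      rw [key] at hz
      linarith
    · intro h z
      have hkkt : ∀ j, |Ψᵀ.mulVec r j / (m:ℝ)| ≤ lam ∧
          (Ψᵀ.mulVec r j / (m:ℝ)) * x j = lam * |x j| :=
        fun j => (soft_iff _ _ _ hlam).mp (h j)
      set w : Fin n → ℝ := fun j => z j - x j with hw
      have hzxw : z = x + w := by funext k; simp [hw]
      have hmv : ∀ i, y i - Ψ.mulVec z i = r i - Ψ.mulVec w i := by
        intro i
        rw [hzxw, Matrix.mulVec_add]
        simp only [Pi.add_apply]
        ring
      have expand : ∑ i, (y i - Ψ.mulVec z i) ^ 2 =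
          (∑ i, r i ^ 2) - 2*(∑ i, r i * Ψ.mulVec w i) + ∑ i, (Ψ.mulVec w i)^2 := by
        simp only [hmv]
        rw [Finset.mul_sum, ← Finset.sum_sub_distrib, ← Finset.sum_add_distrib]
        apply Finset.sum_congr rfl
        intro i _; ring
      have cross : ∑ i, r i * Ψ.mulVec w i = ∑ j, Ψᵀ.mulVec r j * w j := by
        simp only [hBj, Matrix.mulVec, dotProduct, Matrix.transpose_apply, Finset.sum_mul, Finset.mul_sum]
        rw [Finset.sum_comm]
        apply Finset.sum_congr rfl; intro j _
        apply Finset.sum_congr rfl; intro i _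
        ring
      have hterm : ∀ j, (Ψᵀ.mulVec r j / (m:ℝ)) * w j ≤ lam * |z j| - lam * |x j| := by
        intro j
        obtain ⟨h1, h2⟩ := hkkt j
        have h3 : (Ψᵀ.mulVec r j / (m:ℝ)) * z j ≤ lam * |z j| := by
          calc (Ψᵀ.mulVec r j / (m:ℝ)) * z j ≤ |Ψᵀ.mulVec r j / (m:ℝ) * z j| := le_abs_self _
          _ = |Ψᵀ.mulVec r j / (m:ℝ)| * |z j| := abs_mul _ _
          _ ≤ lam * |z j| := mul_le_mul_of_nonneg_right h1 (abs_nonneg _)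
        have hwj : w j = z j - x j := rfl
        rw [hwj]
        nlinarith
      have hsum : ∑ j, (Ψᵀ.mulVec r j / (m:ℝ)) * w j ≤ lam * l1norm z - lam * l1norm x := by
        calc ∑ j, (Ψᵀ.mulVec r j / (m:ℝ)) * w j ≤ ∑ j, (lam * |z j| - lam * |x j|) :=
          Finset.sum_le_sum fun j _ => hterm j
        _ = lam * l1norm z - lam * l1norm x := by
          rw [Finset.sum_sub_distrib]
          unfold l1norm
          rw [Finset.mul_sum, Finset.mul_sum]
      have hST : ∑ j, Ψᵀ.mulVec r j * w j
          = (m:ℝ) * ∑ j, (Ψᵀ.mulVec r j / (m:ℝ)) * w j := by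
        rw [Finset.mul_sum]
        apply Finset.sum_congr rfl
        intro j _
        field_simp
      have hQ : 0 ≤ ∑ i, (Ψ.mulVec w i)^2 := Finset.sum_nonneg fun i _ => sq_nonneg _
      simp only [hri]
      rw [expand, cross, hST]
      have key : 1/(2*(m:ℝ)) * ((∑ i, r i ^ 2) - 2*((m:ℝ) * ∑ j, (Ψᵀ.mulVec r j / (m:ℝ)) * w j) + ∑ i, (Ψ.mulVec w i)^2)
          = 1/(2*(m:ℝ)) * (∑ i, r i ^ 2) - (∑ j, (Ψᵀ.mulVec r j / (m:ℝ)) * w j)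
            + 1/(2*(m:ℝ)) * (∑ i, (Ψ.mulVec w i)^2) := by
        field_simp
      rw [key]
      have : 0 ≤ 1/(2*(m:ℝ)) * (∑ i, (Ψ.mulVec w i)^2) := by positivity
      linarith
end
end

section
/- Let Ψ ∈ ℝ^{m×n}, y ∈ ℝᵐ, λ > 0 and x̃* ∈ ℝⁿ, and set Δ = y − Ψ x̃*. Let x_{ℓ₁} be a minimizer of x ↦ (1/(2m))‖y − Ψx‖₂² + λ‖x‖₁, and set R = x_{ℓ₁} − x̃*. Let A* = supp(x̃*) and I* its complement in [n]. If ‖ΨᵗΔ/m‖_∞ ≤ λ/2, then (1/m)‖ΨR‖₂² + λ‖R_{I*}‖₁ ≤ 3λ‖R_{A*}‖₁; in particular ‖R_{I*}‖₁ ≤ 3‖R_{A*}‖₁, i.e., R belongs to the cone C_{A*} = { z ∈ ℝⁿ : ‖z_{I*}‖₁ ≤ 3‖z_{A*}‖₁ }. -/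
open MeasureTheory ProbabilityTheory Matrix Real

noncomputable section

/-- If `x_{ℓ₁}` minimizes `(1/2m)‖y − Ψx‖₂² + λ‖x‖₁` and the effective
noise `Δ = y − Ψx̃*` satisfies `‖ΨᵗΔ/m‖_∞ ≤ λ/2`, then `R = x_{ℓ₁} − x̃*` satisfies
`(1/m)‖ΨR‖₂² + λ‖R_{I*}‖₁ ≤ 3λ‖R_{A*}‖₁`; in particular `R` lies in the cone
`{z : ‖z_{I*}‖₁ ≤ 3‖z_{A*}‖₁}` where `A* = supp(x̃*)`. -/
theorem l1_minimizer_cone_condition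
    (m n : ℕ) (Ψ : Matrix (Fin m) (Fin n) ℝ) (y : Fin m → ℝ) (lam : ℝ) (hlam : 0 < lam)
    (xtstar xl1 : Fin n → ℝ)
    (hmin : ∀ z : Fin n → ℝ,
      1 / (2 * (m : ℝ)) * ∑ i, (y i - Ψ.mulVec xl1 i) ^ 2 + lam * l1norm xl1 ≤
        1 / (2 * (m : ℝ)) * ∑ i, (y i - Ψ.mulVec z i) ^ 2 + lam * l1norm z)
    (hnoise : linfNorm
        (fun j => (Ψᵀ.mulVec (fun i => y i - Ψ.mulVec xtstar i)) j / (m : ℝ)) ≤ lam / 2) :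
    (1 / (m : ℝ)) * (∑ i, (Ψ.mulVec (fun j => xl1 j - xtstar j) i) ^ 2) +
        lam * ∑ j ∈ (Finset.univ.filter (fun j => xtstar j ≠ 0))ᶜ, |xl1 j - xtstar j| ≤
      3 * lam * ∑ j ∈ Finset.univ.filter (fun j => xtstar j ≠ 0), |xl1 j - xtstar j| ∧
    ∑ j ∈ (Finset.univ.filter (fun j => xtstar j ≠ 0))ᶜ, |xl1 j - xtstar j| ≤
      3 * ∑ j ∈ Finset.univ.filter (fun j => xtstar j ≠ 0), |xl1 j - xtstar j| := by
  
  classical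
  set A : Finset (Fin n) := Finset.univ.filter (fun j => xtstar j ≠ 0) with hA
  set R : Fin n → ℝ := fun j => xl1 j - xtstar j with hR
  set Δ : Fin m → ℝ := fun i => y i - Ψ.mulVec xtstar i with hΔ
  set v : Fin m → ℝ := Ψ.mulVec R with hv
  set c : ℝ := 1 / (2 * (m : ℝ)) with hc
  have h2m : (1 : ℝ) / m = 2 * c := by
    rw [hc, one_div, one_div, mul_inv, ← mul_assoc, mul_inv_cancel₀ (two_ne_zero), one_mul]
  set E1 : ℝ := ∑ i, Δ i ^ 2 with hE1
  set T : ℝ := ∑ i, Δ i * v i with hT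
  set S : ℝ := ∑ i, v i ^ 2 with hS
  have hvi : ∀ i, y i - Ψ.mulVec xl1 i = Δ i - v i := by
    intro i
    simp only [hΔ, hv, hR, Matrix.mulVec, dotProduct, mul_sub,
      Finset.sum_sub_distrib]
    ring
  have hexpand : ∑ i, (y i - Ψ.mulVec xl1 i) ^ 2 = E1 - 2 * T + S := by
    calc ∑ i, (y i - Ψ.mulVec xl1 i) ^ 2
        = ∑ i, (Δ i ^ 2 - 2 * (Δ i * v i) + v i ^ 2) := by
          apply Finset.sum_congr rfl
          intro i _
          rw [hvi i]; ring
      _ = E1 - 2 * T + S := by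
          rw [Finset.sum_add_distrib, Finset.sum_sub_distrib, ← Finset.mul_sum]
  have hmin' := hmin xtstar
  rw [hexpand] at hmin'
  have key : c * S ≤ 2 * c * T + lam * (l1norm xtstar - l1norm xl1) := by nlinarith [hmin']
  -- bound on T
  have hw : ∀ j, |Ψᵀ.mulVec Δ j / (m : ℝ)| ≤ lam / 2 := by
    intro j
    have h := hnoise
    rw [linfNorm] at h
    refine le_trans ?_ h
    exact le_ciSup (f := fun j => |Ψᵀ.mulVec Δ j / (m : ℝ)|)
      (Set.Finite.bddAbove (Set.finite_range _)) j
  have hTsum : T = ∑ j, (Ψᵀ.mulVec Δ) j * R j := by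
    simp only [hT, hv, Matrix.mulVec, dotProduct, Matrix.transpose_apply,
      Finset.mul_sum, Finset.sum_mul]
    rw [Finset.sum_comm]
    exact Finset.sum_congr rfl fun j _ => Finset.sum_congr rfl fun i _ => by ring
  have hTb : 2 * c * T ≤ lam / 2 * ∑ j, |R j| := by
    rw [← h2m, hTsum, Finset.mul_sum, Finset.mul_sum]
    apply Finset.sum_le_sum
    intro j _
    have h1 : 1 / (m : ℝ) * (Ψᵀ.mulVec Δ j * R j) = (Ψᵀ.mulVec Δ j / m) * R j := by ring
    rw [h1]
    calc (Ψᵀ.mulVec Δ j / m) * R j ≤ |(Ψᵀ.mulVec Δ j / m) * R j| := le_abs_self _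
      _ = |Ψᵀ.mulVec Δ j / m| * |R j| := abs_mul _ _
      _ ≤ lam / 2 * |R j| := mul_le_mul_of_nonneg_right (hw j) (abs_nonneg _)
  -- l1 norm comparison
  have hsplit : ∀ u : Fin n → ℝ, l1norm u = ∑ j ∈ A, |u j| + ∑ j ∈ Aᶜ, |u j| :=
    fun u => (Finset.sum_add_sum_compl A _).symm
  have hcompl : ∀ j ∈ Aᶜ, xtstar j = 0 := by
    intro j hj
    simpa [hA] using (Finset.mem_compl.mp hj)
  have hL : l1norm xtstar - l1norm xl1 ≤ ∑ j ∈ A, |R j| - ∑ j ∈ Aᶜ, |R j| := by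
    rw [hsplit xtstar, hsplit xl1]
    have h1 : ∑ j ∈ Aᶜ, |xtstar j| = 0 :=
      Finset.sum_eq_zero fun j hj => by rw [hcompl j hj, abs_zero]
    have h2 : ∑ j ∈ Aᶜ, |xl1 j| = ∑ j ∈ Aᶜ, |R j| :=
      Finset.sum_congr rfl fun j hj => by rw [hR]; simp [hcompl j hj]
    have h3 : ∑ j ∈ A, |xtstar j| - ∑ j ∈ A, |xl1 j| ≤ ∑ j ∈ A, |R j| := by
      rw [← Finset.sum_sub_distrib]
      apply Finset.sum_le_sum
      intro j _
      calc |xtstar j| - |xl1 j| ≤ |xtstar j - xl1 j| := abs_sub_abs_le_abs_sub _ _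
        _ = |R j| := by rw [hR]; rw [abs_sub_comm]
    linarith
  have hab : ∑ j, |R j| = ∑ j ∈ A, |R j| + ∑ j ∈ Aᶜ, |R j| :=
    (Finset.sum_add_sum_compl A _).symm
  have hSnn : 0 ≤ S := Finset.sum_nonneg fun i _ => sq_nonneg _
  have main : 2 * c * S + lam * ∑ j ∈ Aᶜ, |R j| ≤ 3 * lam * ∑ j ∈ A, |R j| := by
    have := hL
    nlinarith [key, hTb, hL, hab, hlam.le]
  have habs : ∀ j, |xl1 j - xtstar j| = |R j| := fun j => rfl
  have goal1 : (1 / (m : ℝ)) * S + lam * ∑ j ∈ Aᶜ, |R j| ≤ 3 * lam * ∑ j ∈ A, |R j| := by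
    rw [h2m]; exact main
  constructor
  · exact goal1
  · have h4 : lam * ∑ j ∈ Aᶜ, |R j| ≤ lam * (3 * ∑ j ∈ A, |R j|) := by
      have : 0 ≤ (1 / (m : ℝ)) * S := by positivity
      linarith
    exact le_of_mul_le_mul_left h4 hlam
end
end

section
/- For every s ≥ 1 and every v ∈ ℝˢ, ‖v‖₂ ≤ ‖v‖₁/√s + (√s/4)·‖v‖_∞. -/
open MeasureTheory ProbabilityTheory Matrix Real

noncomputable section

/-- For every `s ≥ 1` and `v ∈ ℝˢ`,
`‖v‖₂ ≤ ‖v‖₁/√s + (√s/4)‖v‖_∞`. -/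
theorem l2_le_l1_add_linf (s : ℕ) (hs : 1 ≤ s) (v : Fin s → ℝ) :
    l2norm v ≤ l1norm v / Real.sqrt (s : ℝ) + Real.sqrt (s : ℝ) / 4 * linfNorm v := by
  have hs0 : (0 : ℝ) < s := by exact_mod_cast hs
  have hrs : 0 < Real.sqrt s := Real.sqrt_pos.mpr hs0
  have hrs2 : Real.sqrt s * Real.sqrt s = s := Real.mul_self_sqrt hs0.le
  have hinf : ∀ i, |v i| ≤ linfNorm v := fun i =>
    le_ciSup (f := fun i => |v i|) (Set.Finite.bddAbove (Set.finite_range _)) i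
  have hinf0 : 0 ≤ linfNorm v := le_trans (abs_nonneg _) (hinf ⟨0, hs⟩)
  have hl1 : 0 ≤ l1norm v := Finset.sum_nonneg fun i _ => abs_nonneg _
  have hsq : ∑ i, v i ^ 2 ≤ l1norm v * linfNorm v := by
    rw [l1norm, Finset.sum_mul]
    refine Finset.sum_le_sum fun i _ => ?_
    calc v i ^ 2 = |v i| * |v i| := by rw [← sq_abs, sq]
    _ ≤ |v i| * linfNorm v := mul_le_mul_of_nonneg_left (hinf i) (abs_nonneg _)
  have h1 : l2norm v ≤ Real.sqrt (l1norm v * linfNorm v) := Real.sqrt_le_sqrt hsq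
  refine h1.trans ?_
  rw [show Real.sqrt (l1norm v * linfNorm v)
      = Real.sqrt (l1norm v / Real.sqrt s * (Real.sqrt s / 4 * linfNorm v)) * 2 by
    rw [← Real.sqrt_mul_self (by norm_num : (0:ℝ) ≤ 2), ← Real.sqrt_mul (by positivity)]
    congr 1; field_simp; ring_nf]
  nlinarith [sq_nonneg (Real.sqrt (l1norm v / Real.sqrt s) -
      Real.sqrt (Real.sqrt s / 4 * linfNorm v)),
    Real.sq_sqrt (show (0:ℝ) ≤ l1norm v / Real.sqrt s by positivity),
    Real.sq_sqrt (show (0:ℝ) ≤ Real.sqrt s / 4 * linfNorm v by positivity),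
    Real.sqrt_mul_self (show (0:ℝ) ≤ l1norm v / Real.sqrt s by positivity),
    Real.sqrt_mul (show (0:ℝ) ≤ l1norm v / Real.sqrt s by positivity)
      (Real.sqrt s / 4 * linfNorm v)]
end
end

section
/- Let z ∈ ℝⁿ and s ≥ 1. Order the indices k₁, …, k_n so that |z_{k₁}| ≥ |z_{k₂}| ≥ … ≥ |z_{k_n}|, let A = {k₁, …, k_s} be the indices of the s largest-magnitude entries, and for t ≥ 1 let I_t = {k_{st+1}, …, k_{(t+1)s}} (intersected with [n]). If ‖z_{Aᶜ}‖₁ ≤ 3‖z_A‖₁, then Σ_{t≥1} ‖z_{I_t}‖₂ ≤ 4‖z_A‖₂, and consequently ‖z‖₂² ≤ 17‖z_A‖₂². -/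
open MeasureTheory ProbabilityTheory Matrix Real

noncomputable section

/-- Let `k : Fin n → Fin n` be a bijection ordering the entries of `z` by
decreasing magnitude, `A` the set of the `s` largest-magnitude entries, and
`I_t = {k_{st+1}, …, k_{(t+1)s}}` (0-based: images under `k` of indices `st ≤ j < s(t+1)`).
If `‖z_{Aᶜ}‖₁ ≤ 3‖z_A‖₁`, then `Σ_{t≥1} ‖z_{I_t}‖₂ ≤ 4‖z_A‖₂` and consequently
`‖z‖₂² ≤ 17‖z_A‖₂²`.  (For `t > n` the block `I_t` is empty, so the sum over `1 ≤ t ≤ n`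
is the full sum.) -/
theorem shifting_cone_inequality
    (n s : ℕ) (hs : 1 ≤ s) (z : Fin n → ℝ) (k : Fin n → Fin n)
    (hk : Function.Bijective k)
    (hsort : ∀ i j : Fin n, i ≤ j → |z (k j)| ≤ |z (k i)|)
    (A : Finset (Fin n))
    (hA : A = Finset.image k (Finset.univ.filter (fun j : Fin n => (j : ℕ) < s)))
    (I : ℕ → Finset (Fin n))
    (hI : ∀ t : ℕ, I t = Finset.image k
      (Finset.univ.filter (fun j : Fin n => s * t ≤ (j : ℕ) ∧ (j : ℕ) < s * (t + 1))))
    (hcone : ∑ j ∈ Aᶜ, |z j| ≤ 3 * ∑ j ∈ A, |z j|) :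
    (∑ t ∈ Finset.Icc 1 n, Real.sqrt (∑ j ∈ I t, z j ^ 2)) ≤
        4 * Real.sqrt (∑ j ∈ A, z j ^ 2) ∧
      (∑ j, z j ^ 2) ≤ 17 * ∑ j ∈ A, z j ^ 2 := by
  classical
  have hs0 : (0:ℝ) < s := by exact_mod_cast hs
  have hss : 0 < s := hs
  set f : ℕ → Finset (Fin n) := fun t =>
    Finset.univ.filter (fun j : Fin n => s * t ≤ (j : ℕ) ∧ (j : ℕ) < s * (t + 1)) with hf
  have hf0 : f 0 = Finset.univ.filter (fun j : Fin n => (j : ℕ) < s) := by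
    ext j; simp [hf]
  have hA0 : A = Finset.image k (f 0) := by rw [hA, hf0]
  have hsum_image : ∀ (F : Finset (Fin n)) (g : Fin n → ℝ),
      ∑ j ∈ Finset.image k F, g j = ∑ j ∈ F, g (k j) :=
    fun F g => Finset.sum_image (fun a _ b _ h => hk.1 h)
  have hdisj : ∀ t₁ t₂ : ℕ, t₁ ≠ t₂ → Disjoint (f t₁) (f t₂) := by
    intro t₁ t₂ hne
    rw [Finset.disjoint_left]
    intro j h1 h2
    simp only [hf, Finset.mem_filter, Finset.mem_univ, true_and] at h1 h2
    rcases lt_or_gt_of_ne hne with h | h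
    · have : s * (t₁ + 1) ≤ s * t₂ := Nat.mul_le_mul_left s h
      omega
    · have : s * (t₂ + 1) ≤ s * t₁ := Nat.mul_le_mul_left s h
      omega
  have hcover : Finset.univ.filter (fun j : Fin n => s ≤ (j : ℕ)) =
      (Finset.Icc 1 n).biUnion f := by
    ext j
    simp only [hf, Finset.mem_filter, Finset.mem_univ, true_and, Finset.mem_biUnion,
      Finset.mem_Icc]
    constructor
    · intro hj
      have hdm : s * ((j : ℕ) / s) + (j : ℕ) % s = (j : ℕ) := Nat.div_add_mod _ _
      have hms : (j : ℕ) % s < s := Nat.mod_lt _ hss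
      refine ⟨(j : ℕ) / s, ⟨(Nat.one_le_div_iff hss).mpr hj, ?_⟩, ?_, ?_⟩
      · have := Nat.div_le_self (j : ℕ) s
        have := j.isLt
        omega
      · omega
      · have : s * ((j : ℕ) / s + 1) = s * ((j : ℕ) / s) + s := by ring
        omega
    · rintro ⟨t, ⟨ht1, _⟩, h1, _⟩
      calc s = s * 1 := (mul_one s).symm
        _ ≤ s * t := Nat.mul_le_mul_left s ht1
        _ ≤ (j : ℕ) := h1
  have hpart : ∀ g : Fin n → ℝ,
      ∑ j ∈ Finset.univ.filter (fun j : Fin n => s ≤ (j : ℕ)), g j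
        = ∑ t ∈ Finset.Icc 1 n, ∑ j ∈ f t, g j := by
    intro g
    rw [hcover]
    exact Finset.sum_biUnion (fun t₁ _ t₂ _ h => hdisj t₁ t₂ h)
  have hsplituniv : ∀ g : Fin n → ℝ,
      ∑ j, g (k j) = ∑ j ∈ f 0, g (k j)
        + ∑ j ∈ Finset.univ.filter (fun j : Fin n => s ≤ (j : ℕ)), g (k j) := by
    intro g
    rw [← Finset.sum_filter_add_sum_filter_not Finset.univ
      (fun j : Fin n => (j : ℕ) < s) (fun j => g (k j)), hf0]
    congr 1
    congr 1
    ext j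
    simp [not_lt]
  have hsplit : ∀ g : Fin n → ℝ,
      ∑ j ∈ Aᶜ, g j = ∑ t ∈ Finset.Icc 1 n, ∑ j ∈ f t, g (k j) := by
    intro g
    have h1 : ∑ j ∈ Aᶜ, g j + ∑ j ∈ A, g j = ∑ j, g j := Finset.sum_compl_add_sum A g
    have h2 : ∑ j, g j = ∑ j, g (k j) :=
      (Fintype.sum_bijective k hk _ _ (fun j => rfl)).symm
    have h4 : ∑ j ∈ A, g j = ∑ j ∈ f 0, g (k j) := by rw [hA0, hsum_image]
    have h5 := hsplituniv g
    have h6 := hpart (fun j => g (k j))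
    linarith
  set S : ℕ → ℝ := fun t => ∑ j ∈ f t, |z (k j)| with hS
  set e : ℕ → ℝ := fun t => ∑ j ∈ f t, (z (k j)) ^ 2 with he
  have hSnn : ∀ t, 0 ≤ S t := fun t => Finset.sum_nonneg (fun j _ => abs_nonneg _)
  have henn : ∀ t, 0 ≤ e t := fun t => Finset.sum_nonneg (fun j _ => sq_nonneg _)
  have hIe : ∀ t, ∑ j ∈ I t, z j ^ 2 = e t := by
    intro t; rw [hI t, hsum_image]
  have hAe : ∑ j ∈ A, z j ^ 2 = e 0 := by rw [hA0, hsum_image]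
  have hAS : ∑ j ∈ A, |z j| = S 0 := by rw [hA0, hsum_image]
  have hcard_le : ∀ t, (f t).card ≤ s := by
    intro t
    have h := Finset.card_le_card_of_injOn (fun j : Fin n => (j : ℕ))
      (s := f t) (t := Finset.Ico (s * t) (s * (t + 1)))
      (by intro j hj
          simp only [Finset.mem_coe, hf, Finset.mem_filter, Finset.mem_univ, true_and] at hj
          simp [Finset.mem_Ico, hj.1, hj.2])
      (fun a _ b _ hab => Fin.val_injective hab)
    rw [Nat.card_Ico] at h
    have : s * (t + 1) = s * t + s := by ring
    omega
  have hcard_eq : ∀ t, s * (t + 1) ≤ n → (f t).card = s := by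
    intro t ht
    have h : (f t).card = (Finset.Ico (s * t) (s * (t + 1))).card := by
      apply Finset.card_bij (s := f t) (t := Finset.Ico (s * t) (s * (t + 1))) (fun j _ => (j : ℕ))
      · intro j hj
        simp only [hf, Finset.mem_filter, Finset.mem_univ, true_and] at hj
        simp [Finset.mem_Ico, hj.1, hj.2]
      · intro a _ b _ hab; exact Fin.val_injective hab
      · intro x hx
        simp only [Finset.mem_Ico] at hx
        refine ⟨⟨x, lt_of_lt_of_le hx.2 ht⟩, ?_, rfl⟩
        simp [hf, hx.1, hx.2]
    rw [h, Nat.card_Ico]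
    have : s * (t + 1) = s * t + s := by ring
    omega
  have hsqs : (0:ℝ) < Real.sqrt s := Real.sqrt_pos.mpr hs0
  have hkey : ∀ t : ℕ, Real.sqrt (e (t + 1)) ≤ S t / Real.sqrt s := by
    intro t
    rcases Finset.eq_empty_or_nonempty (f (t + 1)) with hemp | ⟨j0, hj0⟩
    · have : e (t + 1) = 0 := by simp [he, hemp]
      rw [this, Real.sqrt_zero]
      exact div_nonneg (hSnn t) hsqs.le
    · have hj0' : s * (t + 1) ≤ (j0 : ℕ) := by
        simp only [hf, Finset.mem_filter, Finset.mem_univ, true_and] at hj0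
        exact hj0.1
      have hn : s * (t + 1) ≤ n := le_trans hj0' j0.isLt.le
      have hcard : (f t).card = s := hcard_eq t hn
      have hbound : ∀ j ∈ f (t + 1), |z (k j)| ≤ S t / s := by
        intro j hj
        have hj' : s * (t + 1) ≤ (j : ℕ) := by
          simp only [hf, Finset.mem_filter, Finset.mem_univ, true_and] at hj
          exact hj.1
        have hmono : ∀ j' ∈ f t, |z (k j)| ≤ |z (k j')| := by
          intro j' hj'mem
          have hlt : (j' : ℕ) < s * (t + 1) := by
            simp only [hf, Finset.mem_filter, Finset.mem_univ, true_and] at hj'mem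
            exact hj'mem.2
          exact hsort j' j (by rw [Fin.le_def]; omega)
        have h := Finset.card_nsmul_le_sum (f t) (fun j' => |z (k j')|) _ hmono
        rw [hcard, nsmul_eq_mul] at h
        rw [le_div_iff₀ hs0]
        linarith
      have he_le : e (t + 1) ≤ (S t / Real.sqrt s) ^ 2 := by
        have h1 : e (t + 1) ≤ ((f (t + 1)).card : ℝ) * (S t / s) ^ 2 := by
          calc e (t + 1) = ∑ j ∈ f (t + 1), (z (k j)) ^ 2 := rfl
            _ ≤ ∑ j ∈ f (t + 1), (S t / s) ^ 2 := by
                apply Finset.sum_le_sum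
                intro j hj
                rw [← sq_abs]
                exact pow_le_pow_left₀ (abs_nonneg _) (hbound j hj) 2
            _ = ((f (t + 1)).card : ℝ) * (S t / s) ^ 2 := by
                rw [Finset.sum_const, nsmul_eq_mul]
        have h2 : ((f (t + 1)).card : ℝ) ≤ (s : ℝ) := by exact_mod_cast hcard_le (t + 1)
        have h3 : (S t / Real.sqrt s) ^ 2 = (s : ℝ) * (S t / s) ^ 2 := by
          rw [div_pow, div_pow, Real.sq_sqrt hs0.le]
          field_simp
        calc e (t + 1) ≤ ((f (t + 1)).card : ℝ) * (S t / s) ^ 2 := h1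
          _ ≤ (s : ℝ) * (S t / s) ^ 2 := mul_le_mul_of_nonneg_right h2 (sq_nonneg _)
          _ = (S t / Real.sqrt s) ^ 2 := h3.symm
      calc Real.sqrt (e (t + 1)) ≤ Real.sqrt ((S t / Real.sqrt s) ^ 2) :=
            Real.sqrt_le_sqrt he_le
        _ = S t / Real.sqrt s := Real.sqrt_sq (div_nonneg (hSnn t) hsqs.le)
  -- reindexing sums
  have hshift : ∑ t ∈ Finset.Icc 1 n, S (t - 1) = ∑ i ∈ Finset.range n, S i := by
    rw [← Finset.Ico_add_one_right_eq_Icc, Finset.sum_Ico_eq_sum_range]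
    apply Finset.sum_congr rfl
    intro i _
    congr 1
    omega
  have hshift2 : ∑ i ∈ Finset.range n, S (i + 1) = ∑ t ∈ Finset.Icc 1 n, S t := by
    rw [← Finset.Ico_add_one_right_eq_Icc, Finset.sum_Ico_eq_sum_range]
    apply Finset.sum_congr rfl
    intro i _
    congr 1
    omega
  have htail : ∑ t ∈ Finset.Icc 1 n, S t ≤ 3 * S 0 := by
    have h := hsplit (fun j => |z j|)
    rw [← hS] at h
    calc ∑ t ∈ Finset.Icc 1 n, S t = ∑ j ∈ Aᶜ, |z j| := h.symm
      _ ≤ 3 * ∑ j ∈ A, |z j| := hcone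
      _ = 3 * S 0 := by rw [hAS]
  have hsum_le : ∑ t ∈ Finset.Icc 1 n, S (t - 1) ≤ 4 * S 0 := by
    calc ∑ t ∈ Finset.Icc 1 n, S (t - 1) = ∑ i ∈ Finset.range n, S i := hshift
      _ ≤ ∑ i ∈ Finset.range (n + 1), S i :=
          Finset.sum_le_sum_of_subset_of_nonneg (Finset.range_subset_range.mpr (Nat.le_succ n))
            (fun i _ _ => hSnn i)
      _ = ∑ i ∈ Finset.range n, S (i + 1) + S 0 := Finset.sum_range_succ' S n
      _ = ∑ t ∈ Finset.Icc 1 n, S t + S 0 := by rw [hshift2]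
      _ ≤ 3 * S 0 + S 0 := by linarith [htail]
      _ = 4 * S 0 := by ring
  -- Cauchy–Schwarz: S 0 ≤ √s * √(e 0)
  have hCS : S 0 ≤ Real.sqrt s * Real.sqrt (e 0) := by
    have h1 : (S 0) ^ 2 ≤ e 0 * ((f 0).card : ℝ) := by
      have h := Finset.sum_mul_sq_le_sq_mul_sq (f 0) (fun j => |z (k j)|) (fun _ => (1:ℝ))
      simp only [mul_one, one_pow, sq_abs, Finset.sum_const, nsmul_eq_mul] at h
      exact h
    have h2 : ((f 0).card : ℝ) ≤ (s : ℝ) := by exact_mod_cast hcard_le 0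
    have h3 : (S 0) ^ 2 ≤ (s : ℝ) * e 0 := by nlinarith [henn 0]
    calc S 0 = Real.sqrt ((S 0) ^ 2) := (Real.sqrt_sq (hSnn 0)).symm
      _ ≤ Real.sqrt ((s : ℝ) * e 0) := Real.sqrt_le_sqrt h3
      _ = Real.sqrt s * Real.sqrt (e 0) := Real.sqrt_mul hs0.le _
  have part1 : ∑ t ∈ Finset.Icc 1 n, Real.sqrt (∑ j ∈ I t, z j ^ 2)
      ≤ 4 * Real.sqrt (∑ j ∈ A, z j ^ 2) := by
    rw [hAe]
    calc ∑ t ∈ Finset.Icc 1 n, Real.sqrt (∑ j ∈ I t, z j ^ 2)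
        = ∑ t ∈ Finset.Icc 1 n, Real.sqrt (e t) := by
          apply Finset.sum_congr rfl
          intro t _
          rw [hIe]
      _ ≤ ∑ t ∈ Finset.Icc 1 n, S (t - 1) / Real.sqrt s := by
          apply Finset.sum_le_sum
          intro t ht
          have ht1 : 1 ≤ t := (Finset.mem_Icc.mp ht).1
          have h := hkey (t - 1)
          rwa [show t - 1 + 1 = t by omega] at h
      _ = (∑ t ∈ Finset.Icc 1 n, S (t - 1)) / Real.sqrt s := by
          rw [Finset.sum_div]
      _ ≤ (4 * S 0) / Real.sqrt s := by
          gcongr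
      _ ≤ (4 * (Real.sqrt s * Real.sqrt (e 0))) / Real.sqrt s := by
          gcongr
      _ = 4 * Real.sqrt (e 0) := by
          field_simp
  refine ⟨part1, ?_⟩
  have hz2 : ∑ j, z j ^ 2 = e 0 + ∑ t ∈ Finset.Icc 1 n, e t := by
    have h2 : ∑ j, z j ^ 2 = ∑ j, z (k j) ^ 2 :=
      (Fintype.sum_bijective k hk _ _ (fun j => rfl)).symm
    have h3 := hsplituniv (fun j => z j ^ 2)
    have h4 := hpart (fun j => z (k j) ^ 2)
    rw [h2, h3, h4, ← he]
  have h2b : ∑ t ∈ Finset.Icc 1 n, e t ≤ (∑ t ∈ Finset.Icc 1 n, Real.sqrt (e t)) ^ 2 := by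
    calc ∑ t ∈ Finset.Icc 1 n, e t
        = ∑ t ∈ Finset.Icc 1 n, (Real.sqrt (e t)) ^ 2 := by
          apply Finset.sum_congr rfl
          intro t _
          rw [Real.sq_sqrt (henn t)]
      _ ≤ (∑ t ∈ Finset.Icc 1 n, Real.sqrt (e t)) ^ 2 :=
          Finset.sum_sq_le_sq_sum_of_nonneg (fun t _ => Real.sqrt_nonneg _)
  have h2c : (∑ t ∈ Finset.Icc 1 n, Real.sqrt (e t)) ^ 2 ≤ 16 * e 0 := by
    have hp1 : ∑ t ∈ Finset.Icc 1 n, Real.sqrt (e t) ≤ 4 * Real.sqrt (e 0) := by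
      have := part1
      rw [hAe] at this
      calc ∑ t ∈ Finset.Icc 1 n, Real.sqrt (e t)
          = ∑ t ∈ Finset.Icc 1 n, Real.sqrt (∑ j ∈ I t, z j ^ 2) := by
            apply Finset.sum_congr rfl
            intro t _
            rw [hIe]
        _ ≤ 4 * Real.sqrt (e 0) := this
    have hnn : 0 ≤ ∑ t ∈ Finset.Icc 1 n, Real.sqrt (e t) :=
      Finset.sum_nonneg (fun t _ => Real.sqrt_nonneg _)
    calc (∑ t ∈ Finset.Icc 1 n, Real.sqrt (e t)) ^ 2
        ≤ (4 * Real.sqrt (e 0)) ^ 2 := pow_le_pow_left₀ hnn hp1 2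
      _ = 16 * e 0 := by
          rw [mul_pow, Real.sq_sqrt (henn 0)]
          norm_num
  rw [hAe, hz2]
  linarith
end
end
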